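/- Let (V,⟨·,·⟩) be an inner product space and let a, b : [0,1] → V be integrable maps. Suppose there exists α ∈ [0,1] such that for all s,t,u,v ∈ [0,1], ⟨a(s),b(u)⟩·⟨a(t),b(v)⟩ ≤ α² · ⟨a(s),a(t)⟩·⟨b(u),b(v)⟩. Then |⟨∫₀¹ a(s) ds, ∫₀¹ b(t) dt⟩| ≤ α · ‖∫₀¹ a(s) ds‖ · ‖∫₀¹ b(t) dt‖. -/

import Mathlib

open MeasureTheory

/-- Cosine bound by cross-ratio control: if for all `s,t,u,v ∈ [0,1]`,
`⟨a s, b u⟩ ⟨a t, b v⟩ ≤ α² ⟨a s, a t⟩ ⟨b u, b v⟩`,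
then `|⟨∫ a, ∫ b⟩| ≤ α ‖∫ a‖ ‖∫ b‖`. -/
theorem stmt6 {V : Type*} [NormedAddCommGroup V] [InnerProductSpace ℝ V]
    [CompleteSpace V]
    (a b : ℝ → V)
    (ha : IntervalIntegrable a MeasureTheory.volume 0 1)
    (hb : IntervalIntegrable b MeasureTheory.volume 0 1)
    (α : ℝ) (hα0 : 0 ≤ α) (hα1 : α ≤ 1)
    (hcross : ∀ s ∈ Set.Icc (0:ℝ) 1, ∀ t ∈ Set.Icc (0:ℝ) 1,
      ∀ u ∈ Set.Icc (0:ℝ) 1, ∀ v ∈ Set.Icc (0:ℝ) 1,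
      (inner ℝ (a s) (b u) : ℝ) * (inner ℝ (a t) (b v) : ℝ) ≤
        α ^ 2 * ((inner ℝ (a s) (a t) : ℝ) * (inner ℝ (b u) (b v) : ℝ))) :
    |(inner ℝ (∫ s in (0:ℝ)..1, a s) (∫ t in (0:ℝ)..1, b t) : ℝ)| ≤
      α * ‖∫ s in (0:ℝ)..1, a s‖ * ‖∫ t in (0:ℝ)..1, b t‖ := by
  rw [intervalIntegral.integral_of_le zero_le_one,
      intervalIntegral.integral_of_le zero_le_one]
  set I : Set ℝ := Set.Ioc 0 1 with hIdef
  have hI : I ⊆ Set.Icc (0:ℝ) 1 := Set.Ioc_subset_Icc_self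
  have hmI : MeasurableSet I := measurableSet_Ioc
  have hma : IntegrableOn a I volume := ha.1
  have hmb : IntegrableOn b I volume := hb.1
  set A := ∫ s in I, a s with hA
  set B := ∫ t in I, b t with hB
  have hga : ∀ c : V, Integrable (fun t => (inner ℝ c (a t) : ℝ)) (volume.restrict I) :=
    fun c => (innerSL ℝ c).integrable_comp hma
  have hgb : ∀ c : V, Integrable (fun t => (inner ℝ c (b t) : ℝ)) (volume.restrict I) :=
    fun c => (innerSL ℝ c).integrable_comp hmb
  have hga' : ∀ c : V, Integrable (fun t => (inner ℝ (a t) c : ℝ)) (volume.restrict I) := by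
    intro c; simpa [real_inner_comm] using hga c
  have hgb' : ∀ c : V, Integrable (fun t => (inner ℝ (b t) c : ℝ)) (volume.restrict I) := by
    intro c; simpa [real_inner_comm] using hgb c
  have gAeq : ∀ c : V, (inner ℝ c A : ℝ) = ∫ s in I, (inner ℝ c (a s) : ℝ) :=
    fun c => (integral_inner hma c).symm
  have gBeq : ∀ c : V, (inner ℝ c B : ℝ) = ∫ t in I, (inner ℝ c (b t) : ℝ) :=
    fun c => (integral_inner hmb c).symm
  have gAeq' : ∀ c : V, (inner ℝ A c : ℝ) = ∫ s in I, (inner ℝ (a s) c : ℝ) := by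
    intro c
    rw [real_inner_comm, gAeq c]
    simp_rw [real_inner_comm c]
  have gBeq' : ∀ c : V, (inner ℝ B c : ℝ) = ∫ t in I, (inner ℝ (b t) c : ℝ) := by
    intro c
    rw [real_inner_comm, gBeq c]
    simp_rw [real_inner_comm c]
  -- Level 1: integrate hcross over v
  have lem1 : ∀ s ∈ Set.Icc (0:ℝ) 1, ∀ t ∈ Set.Icc (0:ℝ) 1, ∀ u ∈ Set.Icc (0:ℝ) 1,
      (inner ℝ (a s) (b u) : ℝ) * (inner ℝ (a t) B : ℝ) ≤
        α ^ 2 * ((inner ℝ (a s) (a t) : ℝ) * (inner ℝ (b u) B : ℝ)) := by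
    intro s hs t ht u hu
    rw [gBeq (a t), gBeq (b u), ← integral_const_mul, ← integral_const_mul,
        ← integral_const_mul]
    refine setIntegral_mono_on ((hgb (a t)).const_mul _)
      (((hgb (b u)).const_mul _).const_mul _) hmI ?_
    intro v hv
    exact hcross s hs t ht u hu v (hI hv)
  -- Level 2: integrate over u
  have lem2 : ∀ s ∈ Set.Icc (0:ℝ) 1, ∀ t ∈ Set.Icc (0:ℝ) 1,
      (inner ℝ (a s) B : ℝ) * (inner ℝ (a t) B : ℝ) ≤
        α ^ 2 * ((inner ℝ (a s) (a t) : ℝ) * (inner ℝ B B : ℝ)) := by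
    intro s hs t ht
    rw [gBeq (a s), ← integral_mul_const, gBeq' B, ← integral_const_mul,
        ← integral_const_mul]
    refine setIntegral_mono_on ((hgb (a s)).mul_const _)
      (((hgb' B).const_mul _).const_mul _) hmI ?_
    intro u hu
    exact lem1 s hs t ht u (hI hu)
  -- Level 3: integrate over t
  have lem3 : ∀ s ∈ Set.Icc (0:ℝ) 1,
      (inner ℝ (a s) B : ℝ) * (inner ℝ A B : ℝ) ≤
        α ^ 2 * ((inner ℝ (a s) A : ℝ) * (inner ℝ B B : ℝ)) := by
    intro s hs
    rw [gAeq' B, ← integral_const_mul, gAeq (a s), ← integral_mul_const,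
        ← integral_const_mul]
    refine setIntegral_mono_on ((hga' B).const_mul _)
      (((hga (a s)).mul_const _).const_mul _) hmI ?_
    intro t ht
    exact lem2 s hs t (hI ht)
  -- Level 4: integrate over s
  have key : (inner ℝ A B : ℝ) * (inner ℝ A B : ℝ) ≤
      α ^ 2 * ((inner ℝ A A : ℝ) * (inner ℝ B B : ℝ)) := by
    nth_rewrite 1 [gAeq' B]
    rw [← integral_mul_const, gAeq' A, ← integral_mul_const, ← integral_const_mul]
    refine setIntegral_mono_on ((hga' B).mul_const _)
      (((hga' A).mul_const _).const_mul _) hmI ?_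
    intro s hs
    exact lem3 s (hI hs)
  have hAA : (inner ℝ A A : ℝ) = ‖A‖ ^ 2 := real_inner_self_eq_norm_sq A
  have hBB : (inner ℝ B B : ℝ) = ‖B‖ ^ 2 := real_inner_self_eq_norm_sq B
  rw [hAA, hBB] at key
  have h0 : (0:ℝ) ≤ α * ‖A‖ * ‖B‖ := by positivity
  nlinarith [key, abs_nonneg (inner ℝ A B : ℝ), sq_abs (inner ℝ A B : ℝ), h0]
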